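/- Let Φ be a simply-laced irreducible finite crystallographic root system and let w ∈ W(Φ) avoid the type A₃ patterns 3142 and 2413. Suppose α, β, γ ∈ Φ⁺ span a root subsystem of type A₃ as simple roots in this order, i.e. (α,β) = (β,γ) = −1 and (α,γ) = 0 (roots normalized to squared length 2). If β, α+β, and β+γ all have the same color with respect to w (all in I_Φ(w), or all not in I_Φ(w)), then α+β+γ has that same color. -/

import Mathlib

open scoped Classical
open Polynomial
noncomputable section

/-- The ambient Euclidean space `ℝⁿ`. -/
abbrev Esp (n : ℕ) : Type := EuclideanSpace ℝ (Fin n)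

/-- The orthogonal reflection in the hyperplane orthogonal to the vector `α`. -/
def rootReflection {n : ℕ} (α : Esp n) : Esp n ≃ₗᵢ[ℝ] Esp n :=
  Submodule.reflection ((ℝ ∙ α)ᗮ)

/-- A finite crystallographic reduced root system in `ℝⁿ`, together with a chosen
system of positive roots.  (The root system is not required to span `ℝⁿ`, so that
subsystems of a root system are again root systems in the same ambient space.) -/
structure RootSys (n : ℕ) where
  roots : Finset (Esp n)
  pos : Finset (Esp n)
  ne_zero : ∀ α ∈ roots, α ≠ (0 : Esp n)
  neg_mem : ∀ α ∈ roots, -α ∈ roots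
  reduced : ∀ α ∈ roots, ∀ t : ℝ, t • α ∈ roots → t = 1 ∨ t = -1
  reflect_mem : ∀ α ∈ roots, ∀ β ∈ roots, rootReflection α β ∈ roots
  crystal : ∀ α ∈ roots, ∀ β ∈ roots, ∃ k : ℤ, 2 * (inner ℝ α β : ℝ) / (inner ℝ α α : ℝ) = (k : ℝ)
  pos_subset : pos ⊆ roots
  pos_iff : ∀ α ∈ roots, (α ∈ pos ↔ -α ∉ pos)
  pos_add : ∀ α ∈ pos, ∀ β ∈ pos, α + β ∈ roots → α + β ∈ pos

namespace RootSys

variable {n : ℕ}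

/-- The Weyl group of a root system: the subgroup of the linear isometries of `ℝⁿ`
generated by the reflections in the roots. -/
def weylGroup (Φ : RootSys n) : Subgroup (Esp n ≃ₗᵢ[ℝ] Esp n) :=
  Subgroup.closure {g | ∃ α ∈ Φ.roots, g = rootReflection α}

/-- The inversion set `I_Φ(w) = {α ∈ Φ⁺ : w α ∈ -Φ⁺}`. -/
def invSet (Φ : RootSys n) (w : Esp n ≃ₗᵢ[ℝ] Esp n) : Finset (Esp n) :=
  Φ.pos.filter fun α => -(w α) ∈ Φ.pos

/-- The length of a Weyl group element, `ℓ(w) = |I_Φ(w)|`. -/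
def len (Φ : RootSys n) (w : Esp n ≃ₗᵢ[ℝ] Esp n) : ℕ :=
  (Φ.invSet w).card

/-- The simple roots: the indecomposable positive roots. -/
def simples (Φ : RootSys n) : Finset (Esp n) :=
  Φ.pos.filter fun α => ¬ ∃ β ∈ Φ.pos, ∃ γ ∈ Φ.pos, α = β + γ

/-- The root poset order: `α ≤ β` iff `β - α` is a nonnegative linear combination of
the simple roots. -/
def rootLE (Φ : RootSys n) (α β : Esp n) : Prop :=
  ∃ c : Esp n → ℝ, (∀ γ, 0 ≤ c γ) ∧ β - α = ∑ γ ∈ Φ.simples, c γ • γ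

/-- The positive roots `β` with `β ≥ α` in the root poset order. -/
def upperRoots (Φ : RootSys n) (α : Esp n) : Finset (Esp n) :=
  Φ.pos.filter fun β => Φ.rootLE α β

/-- `Φ'` is the parabolic root subsystem of `Φ` generated by the subset `Δ'` of the
simple roots. -/
def IsParabolic (Φ Φ' : RootSys n) (Δ' : Finset (Esp n)) : Prop :=
  Φ'.roots = Φ.roots.filter (fun β => β ∈ Submodule.span ℝ (Δ' : Set (Esp n))) ∧
  Φ'.pos = Φ.pos.filter (fun β => β ∈ Submodule.span ℝ (Δ' : Set (Esp n)))

/-- `u` is the restriction `w|_{Φ'}` of `w` to the subsystem `Φ'` of `Φ`: the unique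
element of `W(Φ')` with `I_{Φ'}(u) = I_Φ(w) ∩ (Φ')⁺`. -/
def IsRestriction (Φ' : RootSys n) (u : Esp n ≃ₗᵢ[ℝ] Esp n)
    (Φ : RootSys n) (w : Esp n ≃ₗᵢ[ℝ] Esp n) : Prop :=
  u ∈ Φ'.weylGroup ∧ Φ'.invSet u = Φ.invSet w ∩ Φ'.pos

/-- A decomposition of `Φ` as an orthogonal direct sum of two nonempty subsystems. -/
def IsOrthDecomp (Φ Φ₁ Φ₂ : RootSys n) : Prop :=
  Φ₁.roots.Nonempty ∧ Φ₂.roots.Nonempty ∧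
  (∀ α ∈ Φ₁.roots, ∀ β ∈ Φ₂.roots, (inner ℝ α β : ℝ) = 0) ∧
  Φ.roots = Φ₁.roots ∪ Φ₂.roots ∧ Φ.pos = Φ₁.pos ∪ Φ₂.pos

/-- Irreducibility of a (nonempty) root system. -/
def IsIrreducible (Φ : RootSys n) : Prop :=
  Φ.roots.Nonempty ∧ ¬ ∃ Φ₁ Φ₂ : RootSys n, Φ.IsOrthDecomp Φ₁ Φ₂

/-- `w₀` is the longest element of `W(Φ)`: the element whose inversion set is all of `Φ⁺`. -/
def IsLongest (Φ : RootSys n) (w₀ : Esp n ≃ₗᵢ[ℝ] Esp n) : Prop :=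
  w₀ ∈ Φ.weylGroup ∧ Φ.invSet w₀ = Φ.pos

end RootSys

/-- Separable elements of a Weyl group (Definition 3.1 of the paper):
`w` is separable if `Φ` has rank one; or `Φ` is reducible and the restriction of `w`
to each part of an orthogonal decomposition is separable; or `Φ` is irreducible and
there is a pivot `α ∈ Δ` such that the restriction of `w` to the parabolic subsystem
generated by `Δ ∖ {α}` is separable and `{β ∈ Φ⁺ : β ≥ α}` is contained in or
disjoint from `I_Φ(w)`. -/
inductive Separable : {n : ℕ} → (Φ : RootSys n) → (Esp n ≃ₗᵢ[ℝ] Esp n) → Prop where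
  | rank_one {n : ℕ} (Φ : RootSys n) (w : Esp n ≃ₗᵢ[ℝ] Esp n)
      (hw : w ∈ Φ.weylGroup) (hrk : ∃ α, Φ.pos = {α}) : Separable Φ w
  | reducible {n : ℕ} (Φ Φ₁ Φ₂ : RootSys n) (w u₁ u₂ : Esp n ≃ₗᵢ[ℝ] Esp n)
      (hw : w ∈ Φ.weylGroup) (hd : Φ.IsOrthDecomp Φ₁ Φ₂)
      (h₁ : Φ₁.IsRestriction u₁ Φ w) (h₂ : Φ₂.IsRestriction u₂ Φ w)
      (s₁ : Separable Φ₁ u₁) (s₂ : Separable Φ₂ u₂) : Separable Φ w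
  | pivot {n : ℕ} (Φ Φ' : RootSys n) (w u : Esp n ≃ₗᵢ[ℝ] Esp n) (α : Esp n)
      (hw : w ∈ Φ.weylGroup) (hirr : Φ.IsIrreducible) (hα : α ∈ Φ.simples)
      (hpar : Φ.IsParabolic Φ' (Φ.simples \ {α}))
      (hres : Φ'.IsRestriction u Φ w) (hsep : Separable Φ' u)
      (hcond : Φ.upperRoots α ⊆ Φ.invSet w ∨ ∀ β ∈ Φ.upperRoots α, β ∉ Φ.invSet w) :
      Separable Φ w

/-- The rank generating polynomial `∑_{i=0}^{N} a_i qⁱ` of a sequence of coefficients. -/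
def genPoly (a : ℕ → ℕ) (N : ℕ) : Polynomial ℤ :=
  ∑ i ∈ Finset.range (N + 1), Polynomial.C (a i : ℤ) * Polynomial.X ^ i

/-- A sequence is unimodal (weakly increases, then weakly decreases). -/
def UnimodalSeq (a : ℕ → ℕ) : Prop :=
  ∃ m : ℕ, (∀ i j, i ≤ j → j ≤ m → a i ≤ a j) ∧ (∀ i j, m ≤ i → i ≤ j → a j ≤ a i)

namespace RootSys

variable {n : ℕ}

/-- The size of the `i`-th rank of the lower order ideal `Λ_w` in left weak order. -/
def lowerRankSize (Φ : RootSys n) (w : Esp n ≃ₗᵢ[ℝ] Esp n) (i : ℕ) : ℕ :=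
  Set.ncard {u : Esp n ≃ₗᵢ[ℝ] Esp n |
    u ∈ Φ.weylGroup ∧ Φ.invSet u ⊆ Φ.invSet w ∧ Φ.len u = i}

/-- The size of the `i`-th rank of the upper order ideal `V_w` in left weak order
(graded by `ℓ(u) - ℓ(w)`). -/
def upperRankSize (Φ : RootSys n) (w : Esp n ≃ₗᵢ[ℝ] Esp n) (i : ℕ) : ℕ :=
  Set.ncard {u : Esp n ≃ₗᵢ[ℝ] Esp n |
    u ∈ Φ.weylGroup ∧ Φ.invSet w ⊆ Φ.invSet u ∧ Φ.len u = Φ.len w + i}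

/-- The number of elements of the Weyl group of length `i`. -/
def weylRankSize (Φ : RootSys n) (i : ℕ) : ℕ :=
  Set.ncard {u : Esp n ≃ₗᵢ[ℝ] Esp n | u ∈ Φ.weylGroup ∧ Φ.len u = i}

end RootSys

namespace RootSys

variable {n : ℕ}

/-- `(w, Φ)` contains one of the type `A₃` patterns `3142` or `2413`: there is a
subsystem `Φ ∩ U` of type `A₃` with simple roots `a, b, c` (in this order) on which
the inversion set of `w` restricts to the inversion set of `3142` (namely
`{a, c, a+b+c}`) or of `2413` (namely `{b, a+b, b+c}`). -/
def ContainsA3Pattern (Φ : RootSys n) (w : Esp n ≃ₗᵢ[ℝ] Esp n) : Prop :=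
  ∃ (U : Submodule ℝ (Esp n)) (a b c : Esp n),
    LinearIndependent ℝ ![a, b, c] ∧
    Φ.pos.filter (fun β => β ∈ U) = ({a, b, c, a + b, b + c, a + b + c} : Finset (Esp n)) ∧
    ((Φ.invSet w).filter (fun β => β ∈ U) = ({b, a + b, b + c} : Finset (Esp n)) ∨
      (Φ.invSet w).filter (fun β => β ∈ U) = ({a, c, a + b + c} : Finset (Esp n)))

/-- `(w, Φ)` contains one of the two type `B₂` patterns whose inversion sets have
size two: there is a subsystem `Φ ∩ U` of type `B₂` on which the inversion set of
`w` restricts to a set of size two. -/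
def ContainsB2Pattern (Φ : RootSys n) (w : Esp n ≃ₗᵢ[ℝ] Esp n) : Prop :=
  ∃ (U : Submodule ℝ (Esp n)) (p q : Esp n),
    LinearIndependent ℝ ![p, q] ∧
    Φ.pos.filter (fun β => β ∈ U) = ({p, q, p + q, p + 2 • q} : Finset (Esp n)) ∧
    ((Φ.invSet w).filter (fun β => β ∈ U)).card = 2

/-- `(w, Φ)` contains one of the six type `G₂` patterns whose inversion sets have
sizes two, three, or four. -/
def ContainsG2Pattern (Φ : RootSys n) (w : Esp n ≃ₗᵢ[ℝ] Esp n) : Prop :=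
  ∃ (U : Submodule ℝ (Esp n)) (p q : Esp n),
    LinearIndependent ℝ ![p, q] ∧
    Φ.pos.filter (fun β => β ∈ U) =
      ({p, q, p + q, p + 2 • q, p + 3 • q, 2 • p + 3 • q} : Finset (Esp n)) ∧
    ((Φ.invSet w).filter (fun β => β ∈ U)).card ∈ ({2, 3, 4} : Set ℕ)

/-- A positive root is *small* if all its coefficients on the simple roots are `0` or `1`. -/
def IsSmall (Φ : RootSys n) (β : Esp n) : Prop :=
  ∃ c : Esp n → ℝ, β = ∑ γ ∈ Φ.simples, c γ • γ ∧ ∀ γ ∈ Φ.simples, c γ = 0 ∨ c γ = 1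

/-- The support of `β` (written `β = ∑ c γ • γ` over the simple roots) contains the
simple root `t`. -/
def SuppContains (Φ : RootSys n) (t β : Esp n) : Prop :=
  ∃ c : Esp n → ℝ, β = ∑ γ ∈ Φ.simples, c γ • γ ∧ c t ≠ 0

/-- The parabolic subgroup `W_J` generated by the reflections in the roots of `J`. -/
def parabolicSubgroup (J : Finset (Esp n)) : Subgroup (Esp n ≃ₗᵢ[ℝ] Esp n) :=
  Subgroup.closure {g | ∃ α ∈ J, g = rootReflection α}

/-- `w` is a minimal-length coset representative of `w W_J`, i.e. `w ∈ W^J`. -/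
def IsMinCosetRep (Φ : RootSys n) (J : Finset (Esp n)) (w : Esp n ≃ₗᵢ[ℝ] Esp n) : Prop :=
  w ∈ Φ.weylGroup ∧ ∀ u ∈ parabolicSubgroup (n := n) J, Φ.len w ≤ Φ.len (w * u)

/-- Biconvexity of a subset `A` of a set `P` of positive roots. -/
def IsBiconvexIn (P A : Finset (Esp n)) : Prop :=
  A ⊆ P ∧ (∀ a ∈ A, ∀ b ∈ A, a + b ∈ P → a + b ∈ A) ∧
    (∀ a ∈ P, ∀ b ∈ P, a ∉ A → b ∉ A → a + b ∈ P → a + b ∉ A)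

/-- The number of elements of `W(Φ)` of length `ℓ(w') + i` restricting to `w'` on the
subsystem `Φ'`. -/
def fiberRankSize (Φ Φ' : RootSys n) (w' : Esp n ≃ₗᵢ[ℝ] Esp n) (i : ℕ) : ℕ :=
  Set.ncard {w : Esp n ≃ₗᵢ[ℝ] Esp n |
    w ∈ Φ.weylGroup ∧ Φ'.IsRestriction w' Φ w ∧ Φ.len w = Φ'.len w' + i}

end RootSys

/-- Isomorphism of patterns: a linear map carrying the roots, positive roots, and the
inversion set of the one pattern bijectively onto those of the other. -/
def PatternIso {m k : ℕ} (Ψ : RootSys m) (u : Esp m ≃ₗᵢ[ℝ] Esp m)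
    (Ψ' : RootSys k) (u' : Esp k ≃ₗᵢ[ℝ] Esp k) : Prop :=
  ∃ f : Esp m →ₗ[ℝ] Esp k,
    Set.InjOn f (Ψ.roots : Set (Esp m)) ∧
    Ψ.roots.image ⇑f = Ψ'.roots ∧ Ψ.pos.image ⇑f = Ψ'.pos ∧
    (Ψ.invSet u).image ⇑f = Ψ'.invSet u'

/-- `(w, Φ)` contains a pattern isomorphic to `(u, Ψ)`: there is a subsystem
`Φ ∩ U` of `Φ` on which `w` restricts to an element whose pattern is isomorphic
to `(u, Ψ)`. -/
def ContainsPatternGen {m k : ℕ} (Φ : RootSys m) (w : Esp m ≃ₗᵢ[ℝ] Esp m)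
    (Ψ : RootSys k) (u : Esp k ≃ₗᵢ[ℝ] Esp k) : Prop :=
  ∃ (U : Submodule ℝ (Esp m)) (Ψ₀ : RootSys m) (u₀ : Esp m ≃ₗᵢ[ℝ] Esp m),
    Ψ₀.roots = Φ.roots.filter (fun β => β ∈ U) ∧
    Ψ₀.pos = Φ.pos.filter (fun β => β ∈ U) ∧
    u₀ ∈ Ψ₀.weylGroup ∧ Ψ₀.invSet u₀ = (Φ.invSet w).filter (fun β => β ∈ U) ∧
    PatternIso Ψ₀ u₀ Ψ u

/-- The `i`-th standard basis vector of `ℝⁿ`. -/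
def stdB (n : ℕ) (i : Fin n) : Esp n := EuclideanSpace.single i (1 : ℝ)

/-- The `i`-th simple root of the type `Bₙ` root system: `eᵢ - eᵢ₊₁` for `i < n-1`
and `eₙ₋₁` (the last standard basis vector) for `i = n-1`. -/
def bSimple (n : ℕ) (i : Fin n) : Esp n :=
  stdB n i - (if h : (i : ℕ) + 1 < n then stdB n ⟨(i : ℕ) + 1, h⟩ else 0)

/-- The set of positive roots of the type `Bₙ` root system. -/
def typeBPos (n : ℕ) : Set (Esp n) :=
  {v | ∃ i j : Fin n, i < j ∧ (v = stdB n i - stdB n j ∨ v = stdB n i + stdB n j)} ∪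
    {v | ∃ i : Fin n, v = stdB n i}

/-- The set of positive roots of the type `Cₙ` root system. -/
def typeCPos (n : ℕ) : Set (Esp n) :=
  {v | ∃ i j : Fin n, i < j ∧ (v = stdB n i - stdB n j ∨ v = stdB n i + stdB n j)} ∪
    {v | ∃ i : Fin n, v = 2 • stdB n i}

/-- The set of positive roots of the type `Aₙ` root system (in `ℝⁿ⁺¹`). -/
def typeAPos (n : ℕ) : Set (Esp (n + 1)) :=
  {v | ∃ i j : Fin (n + 1), i < j ∧ v = stdB (n + 1) i - stdB (n + 1) j}

section AuxLemmas

variable {n : ℕ}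

lemma rootReflection_apply' (β x : Esp n) (hβ : (inner ℝ β β : ℝ) = 2) :
    rootReflection β x = x - (inner ℝ β x : ℝ) • β := by
  have h2 : (‖β‖ ^ 2 : ℝ) = 2 := by
    rw [← real_inner_self_eq_norm_sq]; exact hβ
  rw [rootReflection, Submodule.reflection_apply, Submodule.starProjection_orthogonal_val,
    Submodule.starProjection_singleton, h2]
  rw [smul_sub, two_smul]
  abel_nf
  ring_nf
  rw [real_inner_comm]
  module

lemma weyl_maps_roots (Φ : RootSys n) {w : Esp n ≃ₗᵢ[ℝ] Esp n}
    (hw : w ∈ Φ.weylGroup) : ∀ δ ∈ Φ.roots, w δ ∈ Φ.roots := by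
  have key : (∀ δ ∈ Φ.roots, w δ ∈ Φ.roots) ∧ (∀ δ ∈ Φ.roots, w⁻¹ δ ∈ Φ.roots) := by
    refine Subgroup.closure_induction
      (p := fun g _ => (∀ δ ∈ Φ.roots, g δ ∈ Φ.roots) ∧ (∀ δ ∈ Φ.roots, g⁻¹ δ ∈ Φ.roots))
      ?_ ?_ ?_ ?_ hw
    · rintro x ⟨a, ha, rfl⟩
      have hinv : (rootReflection a)⁻¹ = rootReflection a := by
        have : (rootReflection a).symm = rootReflection a := Submodule.reflection_symm
        ext v
        rw [LinearIsometryEquiv.coe_inv, this]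
      constructor
      · intro δ hδ; exact Φ.reflect_mem a ha δ hδ
      · intro δ hδ; rw [hinv]; exact Φ.reflect_mem a ha δ hδ
    · simp
    · intro x y _ _ hx hy
      constructor
      · intro δ hδ
        have : (x * y) δ = x (y δ) := rfl
        rw [this]; exact hx.1 _ (hy.1 δ hδ)
      · intro δ hδ
        have : (x * y)⁻¹ δ = y⁻¹ (x⁻¹ δ) := by
          rw [mul_inv_rev]; rfl
        rw [this]; exact hy.2 _ (hx.2 δ hδ)
    · intro x _ hx
      exact ⟨hx.2, by simpa using hx.1⟩
  exact key.1

lemma black_add (Φ : RootSys n) {w : Esp n ≃ₗᵢ[ℝ] Esp n} (hw : w ∈ Φ.weylGroup)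
    {a b : Esp n} (ha : a ∈ Φ.invSet w) (hb : b ∈ Φ.invSet w)
    (hr : a + b ∈ Φ.roots) : a + b ∈ Φ.invSet w := by
  rw [RootSys.invSet, Finset.mem_filter] at ha hb ⊢
  refine ⟨Φ.pos_add a ha.1 b hb.1 hr, ?_⟩
  have h1 : -(w (a + b)) = -(w a) + -(w b) := by
    rw [map_add]; abel
  rw [h1]
  refine Φ.pos_add _ ha.2 _ hb.2 ?_
  rw [← h1]
  exact Φ.neg_mem _ (weyl_maps_roots Φ hw _ hr)

lemma white_add (Φ : RootSys n) {w : Esp n ≃ₗᵢ[ℝ] Esp n} (hw : w ∈ Φ.weylGroup)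
    {a b : Esp n} (ha : a ∈ Φ.pos) (hb : b ∈ Φ.pos)
    (hwa : a ∉ Φ.invSet w) (hwb : b ∉ Φ.invSet w)
    (hr : a + b ∈ Φ.roots) : a + b ∉ Φ.invSet w := by
  have har : w a ∈ Φ.roots := weyl_maps_roots Φ hw _ (Φ.pos_subset ha)
  have hbr : w b ∈ Φ.roots := weyl_maps_roots Φ hw _ (Φ.pos_subset hb)
  have hwa' : w a ∈ Φ.pos := by
    rw [Φ.pos_iff _ har]
    intro hcon
    exact hwa (Finset.mem_filter.2 ⟨ha, hcon⟩)
  have hwb' : w b ∈ Φ.pos := by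
    rw [Φ.pos_iff _ hbr]
    intro hcon
    exact hwb (Finset.mem_filter.2 ⟨hb, hcon⟩)
  have hsum : w a + w b ∈ Φ.pos := by
    refine Φ.pos_add _ hwa' _ hwb' ?_
    rw [← map_add]
    exact weyl_maps_roots Φ hw _ hr
  intro hcon
  rw [RootSys.invSet, Finset.mem_filter] at hcon
  have h1 : w (a + b) ∈ Φ.pos := by rw [map_add]; exact hsum
  rw [Φ.pos_iff _ (weyl_maps_roots Φ hw _ hr)] at h1
  exact h1 hcon.2

def SqProp (p r s : ℤ) : Prop :=
    (p = 2 ∧ r = 0 ∧ s = 0) ∨ (p = -2 ∧ r = 0 ∧ s = 0) ∨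
    (p = 0 ∧ r = 2 ∧ s = 0) ∨ (p = 0 ∧ r = -2 ∧ s = 0) ∨
    (p = 1 ∧ r = 1 ∧ s = 2) ∨ (p = 1 ∧ r = 1 ∧ s = -2) ∨
    (p = 1 ∧ r = -1 ∧ s = 2) ∨ (p = 1 ∧ r = -1 ∧ s = -2) ∨
    (p = -1 ∧ r = 1 ∧ s = 2) ∨ (p = -1 ∧ r = 1 ∧ s = -2) ∨
    (p = -1 ∧ r = -1 ∧ s = 2) ∨ (p = -1 ∧ r = -1 ∧ s = -2)

instance (p r s : ℤ) : Decidable (SqProp p r s) := by unfold SqProp; infer_instance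

lemma sq_solve (p r s : ℤ) (h : 2*p^2 + 2*r^2 + s^2 = 8) : SqProp p r s := by
  have hp1 : -2 ≤ p := by nlinarith
  have hp2 : p ≤ 2 := by nlinarith
  have hr1 : -2 ≤ r := by nlinarith
  have hr2 : r ≤ 2 := by nlinarith
  have hs1 : -2 ≤ s := by nlinarith
  have hs2 : s ≤ 2 := by nlinarith
  have key : ∀ p ∈ Finset.Icc (-2:ℤ) 2, ∀ r ∈ Finset.Icc (-2:ℤ) 2, ∀ s ∈ Finset.Icc (-2:ℤ) 2,
      2*p^2 + 2*r^2 + s^2 = 8 → SqProp p r s := by decide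
  exact key p (Finset.mem_Icc.2 ⟨hp1, hp2⟩) r (Finset.mem_Icc.2 ⟨hr1, hr2⟩)
    s (Finset.mem_Icc.2 ⟨hs1, hs2⟩) h

end AuxLemmas

set_option maxHeartbeats 4000000 in
/-- **Lemma.** Let `Φ` be simply laced (roots normalized to squared length `2`) and
irreducible, and let `w` avoid `3142` and `2413`.  If `α, β, γ ∈ Φ⁺` span a type
`A₃` subsystem as simple roots in this order, and `β`, `α+β`, `β+γ` all have the
same color with respect to `w`, then `α+β+γ` has that color as well. -/
theorem a3_color_propagation {n : ℕ} (Φ : RootSys n)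
    (hnorm : ∀ α ∈ Φ.roots, (inner ℝ α α : ℝ) = 2) (hirr : Φ.IsIrreducible)
    (w : Esp n ≃ₗᵢ[ℝ] Esp n) (hw : w ∈ Φ.weylGroup)
    (havoid : ¬ Φ.ContainsA3Pattern w)
    (α β γ : Esp n) (hα : α ∈ Φ.pos) (hβ : β ∈ Φ.pos) (hγ : γ ∈ Φ.pos)
    (hab : (inner ℝ α β : ℝ) = -1) (hbc : (inner ℝ β γ : ℝ) = -1)
    (hac : (inner ℝ α γ : ℝ) = 0) :
    ((β ∈ Φ.invSet w ∧ α + β ∈ Φ.invSet w ∧ β + γ ∈ Φ.invSet w) →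
        α + β + γ ∈ Φ.invSet w) ∧
    ((β ∉ Φ.invSet w ∧ α + β ∉ Φ.invSet w ∧ β + γ ∉ Φ.invSet w) →
        α + β + γ ∉ Φ.invSet w) := by
  classical
  have hαr : α ∈ Φ.roots := Φ.pos_subset hα
  have hβr : β ∈ Φ.roots := Φ.pos_subset hβ
  have hγr : γ ∈ Φ.roots := Φ.pos_subset hγ
  have hαα : (inner ℝ α α : ℝ) = 2 := hnorm α hαr
  have hββ : (inner ℝ β β : ℝ) = 2 := hnorm β hβr
  have hγγ : (inner ℝ γ γ : ℝ) = 2 := hnorm γ hγr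
  have hba : (inner ℝ β α : ℝ) = -1 := by rw [real_inner_comm]; exact hab
  have hcb : (inner ℝ γ β : ℝ) = -1 := by rw [real_inner_comm]; exact hbc
  have hca : (inner ℝ γ α : ℝ) = 0 := by rw [real_inner_comm]; exact hac
  have hαβr : α + β ∈ Φ.roots := by
    have h := Φ.reflect_mem β hβr α hαr
    rwa [rootReflection_apply' β α hββ, hba, neg_smul, one_smul, sub_neg_eq_add] at h
  have hαβ : α + β ∈ Φ.pos := Φ.pos_add α hα β hβ hαβr
  have hβγr : β + γ ∈ Φ.roots := by
    have h := Φ.reflect_mem γ hγr β hβr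
    rwa [rootReflection_apply' γ β hγγ, hcb, neg_smul, one_smul, sub_neg_eq_add] at h
  have hβγ : β + γ ∈ Φ.pos := Φ.pos_add β hβ γ hγ hβγr
  have hγαβ : (inner ℝ γ (α + β) : ℝ) = -1 := by
    rw [inner_add_right, hca, hcb]; ring
  have habcr : α + β + γ ∈ Φ.roots := by
    have h := Φ.reflect_mem γ hγr (α + β) hαβr
    rwa [rootReflection_apply' γ (α + β) hγγ, hγαβ, neg_smul, one_smul, sub_neg_eq_add] at h
  have habc : α + β + γ ∈ Φ.pos := Φ.pos_add _ hαβ γ hγ habcr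
  -- linear independence
  have hLI : LinearIndependent ℝ ![α, β, γ] := by
    rw [Fintype.linearIndependent_iff]
    intro g hg
    rw [Fin.sum_univ_three] at hg
    simp only [Matrix.cons_val_zero, Matrix.cons_val_one, Matrix.head_cons,
      Matrix.cons_val_two, Matrix.tail_cons] at hg
    have e1 : (inner ℝ α (g 0 • α + g 1 • β + g 2 • γ) : ℝ) = 0 := by
      rw [hg, inner_zero_right]
    have e2 : (inner ℝ β (g 0 • α + g 1 • β + g 2 • γ) : ℝ) = 0 := by
      rw [hg, inner_zero_right]
    have e3 : (inner ℝ γ (g 0 • α + g 1 • β + g 2 • γ) : ℝ) = 0 := by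
      rw [hg, inner_zero_right]
    rw [inner_add_right, inner_add_right, real_inner_smul_right, real_inner_smul_right,
      real_inner_smul_right, hαα, hab, hac] at e1
    rw [inner_add_right, inner_add_right, real_inner_smul_right, real_inner_smul_right,
      real_inner_smul_right, hba, hββ, hbc] at e2
    rw [inner_add_right, inner_add_right, real_inner_smul_right, real_inner_smul_right,
      real_inner_smul_right, hca, hcb, hγγ] at e3
    have h0 : g 0 = 0 := by linarith
    have h1 : g 1 = 0 := by linarith
    have h2 : g 2 = 0 := by linarith
    intro i
    fin_cases i
    · exact h0
    · exact h1
    · exact h2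
  set U : Submodule ℝ (Esp n) := Submodule.span ℝ ({α, β, γ} : Set (Esp n)) with hUdef
  have hmemU : ∀ δ ∈ U, ∃ a b c : ℝ, δ = a • α + b • β + c • γ := by
    intro δ hδ
    rw [hUdef, Submodule.mem_span_insert] at hδ
    obtain ⟨a, t, ht, rfl⟩ := hδ
    rw [Submodule.mem_span_insert] at ht
    obtain ⟨b, u, hu, rfl⟩ := ht
    rw [Submodule.mem_span_singleton] at hu
    obtain ⟨c, rfl⟩ := hu
    exact ⟨a, b, c, by abel⟩
  have hneg_not_pos : ∀ δ ∈ Φ.pos, δ ∈ Φ.roots → -δ ∉ Φ.pos := by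
    intro δ hδ hδr
    exact (Φ.pos_iff δ hδr).1 hδ
  have hclass : ∀ δ ∈ Φ.pos, δ ∈ U →
      δ = α ∨ δ = β ∨ δ = γ ∨ δ = α + β ∨ δ = β + γ ∨ δ = α + β + γ := by
    intro δ hδpos hδU
    obtain ⟨a, b, c, rfl⟩ := hmemU δ hδU
    have hδr : a • α + b • β + c • γ ∈ Φ.roots := Φ.pos_subset hδpos
    obtain ⟨p, hp⟩ := Φ.crystal α hαr _ hδr
    obtain ⟨q, hq⟩ := Φ.crystal β hβr _ hδr
    obtain ⟨r, hr⟩ := Φ.crystal γ hγr _ hδr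
    rw [hαα] at hp
    rw [hββ] at hq
    rw [hγγ] at hr
    have hA : (inner ℝ α (a • α + b • β + c • γ) : ℝ) = 2*a - b := by
      rw [inner_add_right, inner_add_right, real_inner_smul_right, real_inner_smul_right,
        real_inner_smul_right, hαα, hab, hac]; ring
    have hB : (inner ℝ β (a • α + b • β + c • γ) : ℝ) = -a + 2*b - c := by
      rw [inner_add_right, inner_add_right, real_inner_smul_right, real_inner_smul_right,
        real_inner_smul_right, hba, hββ, hbc]; ring
    have hC : (inner ℝ γ (a • α + b • β + c • γ) : ℝ) = -b + 2*c := by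
      rw [inner_add_right, inner_add_right, real_inner_smul_right, real_inner_smul_right,
        real_inner_smul_right, hca, hcb, hγγ]; ring
    have hpa : (p : ℝ) = 2*a - b := by rw [← hA, ← hp]; ring
    have hqa : (q : ℝ) = -a + 2*b - c := by rw [← hB, ← hq]; ring
    have hra : (r : ℝ) = -b + 2*c := by rw [← hC, ← hr]; ring
    have hnδ : (inner ℝ (a • α + b • β + c • γ) (a • α + b • β + c • γ) : ℝ) = 2 :=
      hnorm _ hδr
    have h2 : a*(2*a-b) + b*(-a+2*b-c) + c*(-b+2*c) = 2 := by
      rw [← hA, ← hB, ← hC, ← hnδ]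
      rw [inner_add_left, inner_add_left, real_inner_smul_left, real_inner_smul_left,
        real_inner_smul_left]
    set s : ℤ := p + r + 2*q with hsdef
    have hsa : (s : ℝ) = 2*b := by
      rw [hsdef]; push_cast; rw [hpa, hqa, hra]; ring
    have hkey : 2*p^2 + 2*r^2 + s^2 = 8 := by
      have hre : (2*(p:ℝ)^2 + 2*(r:ℝ)^2 + (s:ℝ)^2 : ℝ) = 8 := by
        rw [hpa, hra, hsa]; linear_combination 4*h2
      exact_mod_cast hre
    have h12 := sq_solve p r s hkey
    unfold SqProp at h12
    have hcontra : ∀ ε ∈ Φ.pos, ε ∈ Φ.roots → a • α + b • β + c • γ = -ε → False := by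
      intro ε hε hεr heq
      rw [heq] at hδpos
      exact hneg_not_pos ε hε hεr hδpos
    rcases h12 with ⟨e1,e2,e3⟩|⟨e1,e2,e3⟩|⟨e1,e2,e3⟩|⟨e1,e2,e3⟩|⟨e1,e2,e3⟩|⟨e1,e2,e3⟩|
      ⟨e1,e2,e3⟩|⟨e1,e2,e3⟩|⟨e1,e2,e3⟩|⟨e1,e2,e3⟩|⟨e1,e2,e3⟩|⟨e1,e2,e3⟩ <;>
      rw [e1] at hpa <;> rw [e2] at hra <;> rw [e3] at hsa <;>
      push_cast at hpa hra hsa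
    -- (2,0,0) : δ = α
    · have hb : b = 0 := by linarith
      have ha' : a = 1 := by linarith
      have hc : c = 0 := by linarith
      left; rw [ha', hb, hc]; module
    -- (-2,0,0) : δ = -α
    · exfalso
      refine hcontra α hα hαr ?_
      have hb : b = 0 := by linarith
      have ha' : a = -1 := by linarith
      have hc : c = 0 := by linarith
      rw [ha', hb, hc]; module
    -- (0,2,0) : δ = γ
    · have hb : b = 0 := by linarith
      have ha' : a = 0 := by linarith
      have hc : c = 1 := by linarith
      right; right; left; rw [ha', hb, hc]; module
    -- (0,-2,0) : δ = -γ
    · exfalso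
      refine hcontra γ hγ hγr ?_
      have hb : b = 0 := by linarith
      have ha' : a = 0 := by linarith
      have hc : c = -1 := by linarith
      rw [ha', hb, hc]; module
    -- (1,1,2) : δ = α + β + γ
    · have hb : b = 1 := by linarith
      have ha' : a = 1 := by linarith
      have hc : c = 1 := by linarith
      right; right; right; right; right; rw [ha', hb, hc]; module
    -- (1,1,-2) : δ = -β
    · exfalso
      refine hcontra β hβ hβr ?_
      have hb : b = -1 := by linarith
      have ha' : a = 0 := by linarith
      have hc : c = 0 := by linarith
      rw [ha', hb, hc]; module
    -- (1,-1,2) : δ = α + β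
    · have hb : b = 1 := by linarith
      have ha' : a = 1 := by linarith
      have hc : c = 0 := by linarith
      right; right; right; left; rw [ha', hb, hc]; module
    -- (1,-1,-2) : δ = -(β + γ)
    · exfalso
      refine hcontra (β + γ) hβγ hβγr ?_
      have hb : b = -1 := by linarith
      have ha' : a = 0 := by linarith
      have hc : c = -1 := by linarith
      rw [ha', hb, hc]; module
    -- (-1,1,2) : δ = β + γ
    · have hb : b = 1 := by linarith
      have ha' : a = 0 := by linarith
      have hc : c = 1 := by linarith
      right; right; right; right; left; rw [ha', hb, hc]; module
    -- (-1,1,-2) : δ = -(α + β)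
    · exfalso
      refine hcontra (α + β) hαβ hαβr ?_
      have hb : b = -1 := by linarith
      have ha' : a = -1 := by linarith
      have hc : c = 0 := by linarith
      rw [ha', hb, hc]; module
    -- (-1,-1,2) : δ = β
    · have hb : b = 1 := by linarith
      have ha' : a = 0 := by linarith
      have hc : c = 0 := by linarith
      right; left; rw [ha', hb, hc]; module
    -- (-1,-1,-2) : δ = -(α + β + γ)
    · exfalso
      refine hcontra (α + β + γ) habc habcr ?_
      have hb : b = -1 := by linarith
      have ha' : a = -1 := by linarith
      have hc : c = -1 := by linarith
      rw [ha', hb, hc]; module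
  have hUα : α ∈ U := Submodule.subset_span (by simp)
  have hUβ : β ∈ U := Submodule.subset_span (by simp)
  have hUγ : γ ∈ U := Submodule.subset_span (by simp)
  have hUαβ : α + β ∈ U := U.add_mem hUα hUβ
  have hUβγ : β + γ ∈ U := U.add_mem hUβ hUγ
  have hUabc : α + β + γ ∈ U := U.add_mem hUαβ hUγ
  have hU_pos : Φ.pos.filter (fun δ => δ ∈ U) =
      ({α, β, γ, α + β, β + γ, α + β + γ} : Finset (Esp n)) := by
    ext δ
    simp only [Finset.mem_filter, Finset.mem_insert, Finset.mem_singleton]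
    constructor
    · rintro ⟨h1, h2⟩
      exact hclass δ h1 h2
    · rintro (rfl|rfl|rfl|rfl|rfl|rfl)
      · exact ⟨hα, hUα⟩
      · exact ⟨hβ, hUβ⟩
      · exact ⟨hγ, hUγ⟩
      · exact ⟨hαβ, hUαβ⟩
      · exact ⟨hβγ, hUβγ⟩
      · exact ⟨habc, hUabc⟩
  have hinv_pos : ∀ δ, δ ∈ Φ.invSet w → δ ∈ Φ.pos := by
    intro δ h
    exact (Finset.mem_filter.1 h).1
  constructor
  · rintro ⟨h1, h2, h3⟩
    by_contra h4
    have hαw : α ∉ Φ.invSet w := by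
      intro h
      apply h4
      rw [add_assoc]
      exact black_add Φ hw h h3 (by rw [← add_assoc]; exact habcr)
    have hγw : γ ∉ Φ.invSet w := by
      intro h
      exact h4 (black_add Φ hw h2 h habcr)
    apply havoid
    refine ⟨U, α, β, γ, hLI, hU_pos, Or.inl ?_⟩
    ext δ
    simp only [Finset.mem_filter, Finset.mem_insert, Finset.mem_singleton]
    constructor
    · rintro ⟨hi, hu⟩
      rcases hclass δ (hinv_pos δ hi) hu with rfl|rfl|rfl|rfl|rfl|rfl
      · exact absurd hi hαw
      · exact Or.inl rfl
      · exact absurd hi hγw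
      · exact Or.inr (Or.inl rfl)
      · exact Or.inr (Or.inr rfl)
      · exact absurd hi h4
    · rintro (rfl|rfl|rfl)
      · exact ⟨h1, hUβ⟩
      · exact ⟨h2, hUαβ⟩
      · exact ⟨h3, hUβγ⟩
  · rintro ⟨h1, h2, h3⟩
    intro h4
    have hαb : α ∈ Φ.invSet w := by
      by_contra h
      exact white_add Φ hw hα hβγ h h3 (by rw [← add_assoc]; exact habcr)
        (by rw [← add_assoc]; exact h4)
    have hγb : γ ∈ Φ.invSet w := by
      by_contra h
      exact white_add Φ hw hαβ hγ h2 h habcr h4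
    apply havoid
    refine ⟨U, α, β, γ, hLI, hU_pos, Or.inr ?_⟩
    ext δ
    simp only [Finset.mem_filter, Finset.mem_insert, Finset.mem_singleton]
    constructor
    · rintro ⟨hi, hu⟩
      rcases hclass δ (hinv_pos δ hi) hu with rfl|rfl|rfl|rfl|rfl|rfl
      · exact Or.inl rfl
      · exact absurd hi h1
      · exact Or.inr (Or.inl rfl)
      · exact absurd hi h2
      · exact absurd hi h3
      · exact Or.inr (Or.inr rfl)
    · rintro (rfl|rfl|rfl)
      · exact ⟨hαb, hUα⟩
      · exact ⟨hγb, hUγ⟩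
      · exact ⟨h4, hUabc⟩
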